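/- Let A be a symmetric finite dimensional k-algebra (so D(A) ≅ A as A-A-bimodules). Then the category of (cochain) complexes of A-modules C(Mod A) is equivalent to the category of ℤ-graded modules over the trivial extension T(A) = A ⋉ D(A). -/

import Mathlib

open CategoryTheory


open CategoryTheory

/-- A ℤ-graded module over the trivial extension `T(A) = A ⋉ D(A)` of a finite dimensional
`k`-algebra `A`: a family `M = ⊕_{i} M_i` of `A`-modules together with `A`-balanced,
`A`-linear structure maps `D(A) ⊗_A M_i → M_{i+1}` (recorded here as bilinear maps
`θ i : D(A) → M i → M (i+1)`) whose consecutive composites vanish. -/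
structure GradedTrivExtMod (k A : Type) [Field k] [Ring A] [Algebra k A] where
  M : ℤ → Type
  [acg : ∀ i, AddCommGroup (M i)]
  [mod : ∀ i, Module A (M i)]
  θ : ∀ i : ℤ, Module.Dual k A → M i → M (i + 1)
  addLeft : ∀ i (φ ψ : Module.Dual k A) (m : M i), θ i (φ + ψ) m = θ i φ m + θ i ψ m
  addRight : ∀ i (φ : Module.Dual k A) (m m' : M i), θ i φ (m + m') = θ i φ m + θ i φ m'
  /-- balancedness over `A`: `(φ·a) ⊗ m = φ ⊗ (a·m)`, where `(φ·a)(c) = φ(ac)`. -/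
  balanced : ∀ i (φ : Module.Dual k A) (a : A) (m : M i),
    θ i (φ.comp (LinearMap.mulLeft k a)) m = θ i φ (a • m)
  /-- `A`-linearity: `a·(φ ⊗ m) = (a·φ) ⊗ m`, where `(a·φ)(c) = φ(ca)`. -/
  linear : ∀ i (φ : Module.Dual k A) (a : A) (m : M i),
    θ i (φ.comp (LinearMap.mulRight k a)) m = a • θ i φ m
  /-- consecutive composites vanish -/
  sq : ∀ i (φ ψ : Module.Dual k A) (m : M i), θ (i + 1) φ (θ i ψ m) = 0

attribute [instance] GradedTrivExtMod.acg GradedTrivExtMod.mod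

variable {k A : Type} [Field k] [Ring A] [Algebra k A]

/-- Morphisms of graded `T(A)`-modules: degreewise `A`-linear maps commuting with the
structure maps. -/
instance : Category (GradedTrivExtMod k A) where
  Hom X Y := { h : ∀ i, X.M i →ₗ[A] Y.M i //
    ∀ (i : ℤ) (φ : Module.Dual k A) (m : X.M i),
      h (i + 1) (X.θ i φ m) = Y.θ i φ (h i m) }
  id X := ⟨fun _ => LinearMap.id, fun _ _ _ => rfl⟩
  comp f g := ⟨fun i => (g.1 i).comp (f.1 i), by
    intro i φ m
    simp [f.2, g.2]⟩
  id_comp f := by apply Subtype.ext; funext i; rfl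
  comp_id f := by apply Subtype.ext; funext i; rfl
  assoc f g h := by apply Subtype.ext; funext i; rfl


section Aux

variable {k A : Type} [Field k] [Ring A] [Algebra k A]
variable [FiniteDimensional k A] (B : A →ₗ[k] A →ₗ[k] k)

set_option linter.unusedSectionVars false

/-- The isomorphism `A ≃ D(A)` coming from the nondegenerate form. -/
noncomputable def bEquiv (hnondeg : ∀ x : A, (∀ y : A, B x y = 0) → x = 0) :
    A ≃ₗ[k] Module.Dual k A :=
  B.linearEquivOfInjective
    (by
      intro x y h
      have hz : B (x - y) = 0 := by rw [map_sub, h, sub_self]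
      have := hnondeg (x - y) (fun c => by rw [hz]; rfl)
      exact sub_eq_zero.mp this)
    Subspace.dual_finrank_eq.symm

variable (hnondeg : ∀ x : A, (∀ y : A, B x y = 0) → x = 0)

lemma bEquiv_apply (a : A) : bEquiv B hnondeg a = B a :=
  B.linearEquivOfInjective_apply _ _ a

lemma B_tau (φ : Module.Dual k A) : B ((bEquiv B hnondeg).symm φ) = φ := by
  rw [← bEquiv_apply B hnondeg]
  exact (bEquiv B hnondeg).apply_symm_apply φ

lemma tau_B_one : (bEquiv B hnondeg).symm (B 1) = 1 := by
  rw [← bEquiv_apply B hnondeg]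
  exact (bEquiv B hnondeg).symm_apply_apply 1

lemma comp_mulLeft (hassoc : ∀ x y z : A, B (x * y) z = B x (y * z)) (x a : A) :
    (B x).comp (LinearMap.mulLeft k a) = B (x * a) := by
  ext c
  simp only [LinearMap.comp_apply, LinearMap.mulLeft_apply]
  exact (hassoc x a c).symm

lemma comp_mulRight (hsymm : ∀ x y : A, B x y = B y x)
    (hassoc : ∀ x y z : A, B (x * y) z = B x (y * z)) (x a : A) :
    (B x).comp (LinearMap.mulRight k a) = B (a * x) := by
  ext c
  simp only [LinearMap.comp_apply, LinearMap.mulRight_apply]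
  exact ((hassoc a x c).trans ((hsymm a (x * c)).trans (hassoc x c a))).symm

lemma tau_comp_mulLeft (hassoc : ∀ x y z : A, B (x * y) z = B x (y * z))
    (φ : Module.Dual k A) (a : A) :
    (bEquiv B hnondeg).symm (φ.comp (LinearMap.mulLeft k a))
      = (bEquiv B hnondeg).symm φ * a := by
  rw [LinearEquiv.symm_apply_eq, bEquiv_apply B hnondeg, ← comp_mulLeft B hassoc,
    B_tau B hnondeg]

lemma tau_comp_mulRight (hsymm : ∀ x y : A, B x y = B y x)
    (hassoc : ∀ x y z : A, B (x * y) z = B x (y * z))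
    (φ : Module.Dual k A) (a : A) :
    (bEquiv B hnondeg).symm (φ.comp (LinearMap.mulRight k a))
      = a * (bEquiv B hnondeg).symm φ := by
  rw [LinearEquiv.symm_apply_eq, bEquiv_apply B hnondeg, ← comp_mulRight B hsymm hassoc,
    B_tau B hnondeg]

lemma beta_mulLeft_eq_mulRight (hsymm : ∀ x y : A, B x y = B y x)
    (hassoc : ∀ x y z : A, B (x * y) z = B x (y * z)) (a : A) :
    (B 1).comp (LinearMap.mulLeft k a) = (B 1).comp (LinearMap.mulRight k a) := by
  rw [comp_mulLeft B hassoc, comp_mulRight B hsymm hassoc, one_mul, mul_one]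

variable (hsymm : ∀ x y : A, B x y = B y x)
variable (hassoc : ∀ x y z : A, B (x * y) z = B x (y * z))

/-- A complex gives a graded module over the trivial extension. -/
noncomputable def Fobj (X : CochainComplex (ModuleCat.{0} A) ℤ) : GradedTrivExtMod k A where
  M i := X.X i
  θ i φ m := X.d i (i + 1) ((bEquiv B hnondeg).symm φ • m)
  addLeft i φ ψ m := by dsimp only; rw [map_add, add_smul, map_add]
  addRight i φ m m' := by dsimp only; rw [smul_add, map_add]
  balanced i φ a m := by dsimp only; rw [tau_comp_mulLeft B hnondeg hassoc, mul_smul]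
  linear i φ a m := by
    dsimp only; rw [tau_comp_mulRight B hnondeg hsymm hassoc, mul_smul, map_smul]
  sq i φ ψ m := by
    dsimp only
    rw [← map_smul (ConcreteCategory.hom (X.d i (i + 1)))]
    have h0 := LinearMap.congr_fun (ModuleCat.hom_ext_iff.mp (X.d_comp_d i (i + 1) (i + 1 + 1)))
      ((bEquiv B hnondeg).symm φ • (bEquiv B hnondeg).symm ψ • m)
    exact h0

/-- The functor from complexes to graded trivial-extension modules. -/
noncomputable def Ffun : CochainComplex (ModuleCat.{0} A) ℤ ⥤ GradedTrivExtMod k A where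
  obj X := Fobj B hnondeg hsymm hassoc X
  map {X Y} f := ⟨fun i => (f.f i).hom, by
    intro i φ m
    show f.f (i + 1) (X.d i (i + 1) ((bEquiv B hnondeg).symm φ • (m : X.X i)))
      = Y.d i (i + 1) ((bEquiv B hnondeg).symm φ • f.f i (m : X.X i))
    erw [← map_smul (ConcreteCategory.hom (f.f i))]
    exact (LinearMap.congr_fun (ModuleCat.hom_ext_iff.mp (f.comm i (i + 1)))
      ((bEquiv B hnondeg).symm φ • m)).symm⟩
  map_id X := by apply Subtype.ext; funext i; rfl
  map_comp f g := by apply Subtype.ext; funext i; rfl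

/-- The degreewise differential attached to a graded module. -/
noncomputable def dmap (N : GradedTrivExtMod k A) (i : ℤ) :
    ModuleCat.of A (N.M i) ⟶ ModuleCat.of A (N.M (i + 1)) := ModuleCat.ofHom {
  toFun := N.θ i (B 1)
  map_add' := fun m m' => N.addRight i (B 1) m m'
  map_smul' := fun a m => by
    have h1 := N.balanced i (B 1) a m
    have h2 := N.linear i (B 1) a m
    rw [beta_mulLeft_eq_mulRight B hsymm hassoc a] at h1
    simp only [RingHom.id_apply]
    rw [← h1]
    exact h2 }

/-- A graded module over the trivial extension gives a complex. -/
noncomputable def Gobj (N : GradedTrivExtMod k A) : CochainComplex (ModuleCat.{0} A) ℤ where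
  X i := ModuleCat.of A (N.M i)
  d i j := if h : i + 1 = j then dmap B hsymm hassoc N i ≫ eqToHom (by rw [h]) else 0
  shape i j hij := dif_neg hij
  d_comp_d' i j l hij hjl := by
    have hij' : i + 1 = j := hij
    have hjl' : j + 1 = l := hjl
    subst hij'; subst hjl'
    rw [dif_pos rfl, dif_pos rfl]
    simp only [eqToHom_refl, Category.comp_id]
    ext m
    have := N.sq i (B 1) (B 1) m
    exact this

lemma Gobj_d (N : GradedTrivExtMod k A) (i : ℤ) :
    (Gobj B hsymm hassoc N).d i (i + 1) = dmap B hsymm hassoc N i := by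
  show (if h : i + 1 = i + 1 then dmap B hsymm hassoc N i ≫ eqToHom (by rw [h]) else 0) = _
  rw [dif_pos rfl]
  simp

/-- The functor from graded trivial-extension modules to complexes. -/
noncomputable def Gfun : GradedTrivExtMod k A ⥤ CochainComplex (ModuleCat.{0} A) ℤ where
  obj N := Gobj B hsymm hassoc N
  map {N N'} h :=
    { f := fun i => ModuleCat.ofHom (h.1 i)
      comm' := by
        intro i j hij
        have hij' : i + 1 = j := hij
        subst hij'
        rw [Gobj_d, Gobj_d]
        ext m
        exact (h.2 i (B 1) m).symm }
  map_id N := by ext i : 2; rfl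
  map_comp f g := by ext i : 2; rfl

lemma theta_FG (N : GradedTrivExtMod k A) (i : ℤ) (φ : Module.Dual k A) (m : N.M i) :
    (Fobj B hnondeg hsymm hassoc (Gobj B hsymm hassoc N)).θ i φ m = N.θ i φ m := by
  show (Gobj B hsymm hassoc N).d i (i + 1) ((bEquiv B hnondeg).symm φ • m) = _
  rw [Gobj_d]
  show N.θ i (B 1) ((bEquiv B hnondeg).symm φ • m) = _
  rw [← N.balanced, comp_mulLeft B hassoc, one_mul, B_tau]

end Aux

/-- Let `A` be a symmetric finite dimensional `k`-algebra, i.e. `A`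
carries a nondegenerate symmetric associative bilinear form (equivalently,
`D(A) ≅ A` as `A`-`A`-bimodules).  Then the category `C(Mod A)` of (cochain) complexes of
`A`-modules is equivalent to the category of ℤ-graded modules over the trivial extension
`T(A) = A ⋉ D(A)`. -/
theorem complexes_equiv_graded_trivial_extension_modules
    (k A : Type) [Field k] [Ring A] [Algebra k A] [FiniteDimensional k A]
    (B : A →ₗ[k] A →ₗ[k] k)
    (hsymm : ∀ x y : A, B x y = B y x)
    (hassoc : ∀ x y z : A, B (x * y) z = B x (y * z))
    (hnondeg : ∀ x : A, (∀ y : A, B x y = 0) → x = 0) :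
    Nonempty (CochainComplex (ModuleCat.{0} A) ℤ ≌ GradedTrivExtMod k A) := by
  refine ⟨CategoryTheory.Equivalence.mk (Ffun B hnondeg hsymm hassoc) (Gfun B hsymm hassoc) ?_ ?_⟩
  · -- unit : 𝟭 ≅ F ⋙ G
    refine NatIso.ofComponents (fun X => HomologicalComplex.Hom.isoOfComponents
      (fun i => Iso.refl _) ?_) ?_
    · intro i j hij
      have hij' : i + 1 = j := hij
      subst hij'
      simp only [Iso.refl_hom, Category.id_comp, Category.comp_id]
      show (Gobj B hsymm hassoc (Fobj B hnondeg hsymm hassoc X)).d i (i + 1) = X.d i (i + 1)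
      rw [Gobj_d]
      ext m
      show X.d i (i + 1) ((bEquiv B hnondeg).symm (B 1) • m) = X.d i (i + 1) m
      rw [tau_B_one B hnondeg, one_smul]
    · intro X Y f
      ext i : 2
      simp
      rfl
  · -- counit : G ⋙ F ≅ 𝟭
    refine NatIso.ofComponents (fun N => ?_) ?_
    · refine ⟨⟨fun i => LinearMap.id, ?_⟩, ⟨fun i => LinearMap.id, ?_⟩, ?_, ?_⟩
      · intro i φ m
        exact theta_FG B hnondeg hsymm hassoc N i φ m
      · intro i φ m
        exact (theta_FG B hnondeg hsymm hassoc N i φ m).symm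
      · apply Subtype.ext; funext i; rfl
      · apply Subtype.ext; funext i; rfl
    · intro N N' h
      apply Subtype.ext; funext i; rfl
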